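/- Let a₁, …, a_m ∈ ℝ³ be constant unit vectors, k₁, …, k_m > 0, k_ω > 0, k_V ≥ 0, let ω : ℝ → ℝ³ and b₁, …, b_m : ℝ → ℝ³ be differentiable with ‖b_j(t)‖ = 1 for all t, and suppose the closed-loop dynamics b_j′(t) = b_j(t) × ω(t) and ω′(t) = −k_ω ω(t) − e(t) hold, where e(t) = Σ_{j=1}^m k_j (a_j × b_j(t)). Define V(t) = Σ_{j=1}^m k_j (1 + a_j · b_j(t)) + ½‖ω(t)‖² + k_V (e(t) · ω(t)). Then V is differentiable and for all t, V′(t) ≤ −(k_ω − k_V Σ_{j=1}^m k_j) ‖ω(t)‖² − k_V ‖e(t)‖² + k_V k_ω ‖e(t)‖ ‖ω(t)‖. -/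

import Mathlib

open Matrix

/-- The cross product on `ℝ³` with the Euclidean structure. -/
noncomputable def cross3 (x y : EuclideanSpace ℝ (Fin 3)) : EuclideanSpace ℝ (Fin 3) :=
  (WithLp.equiv 2 (Fin 3 → ℝ)).symm
    (crossProduct ((WithLp.equiv 2 (Fin 3 → ℝ)) x) ((WithLp.equiv 2 (Fin 3 → ℝ)) y))

noncomputable def crossCLM (x : EuclideanSpace ℝ (Fin 3)) :
    EuclideanSpace ℝ (Fin 3) →L[ℝ] EuclideanSpace ℝ (Fin 3) :=
  LinearMap.toContinuousLinearMap
    (((WithLp.linearEquiv 2 ℝ (Fin 3 → ℝ)).symm.toLinearMap.comp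
        (crossProduct ((WithLp.equiv 2 (Fin 3 → ℝ)) x))).comp
      (WithLp.linearEquiv 2 ℝ (Fin 3 → ℝ)).toLinearMap)

lemma crossCLM_apply (x y : EuclideanSpace ℝ (Fin 3)) : crossCLM x y = cross3 x y := rfl

lemma inner_eq_dot (x y : EuclideanSpace ℝ (Fin 3)) :
    (inner ℝ x y : ℝ) = (WithLp.equiv 2 (Fin 3 → ℝ) x) ⬝ᵥ (WithLp.equiv 2 (Fin 3 → ℝ) y) := by
  simp [PiLp.inner_apply, dotProduct, mul_comm]

lemma cross3_triple (x y z : EuclideanSpace ℝ (Fin 3)) :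
    (inner ℝ x (cross3 y z) : ℝ) = inner ℝ (cross3 x y) z := by
  simp only [inner_eq_dot, cross3, Equiv.apply_symm_apply]
  rw [triple_product_permutation, triple_product_permutation, dotProduct_comm]

lemma norm_sq_eq_dot (x : EuclideanSpace ℝ (Fin 3)) :
    ‖x‖ ^ 2 = (WithLp.equiv 2 (Fin 3 → ℝ) x) ⬝ᵥ (WithLp.equiv 2 (Fin 3 → ℝ) x) := by
  rw [← inner_eq_dot, real_inner_self_eq_norm_sq]

lemma norm_cross3_le (x y : EuclideanSpace ℝ (Fin 3)) : ‖cross3 x y‖ ≤ ‖x‖ * ‖y‖ := by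
  have h : ‖cross3 x y‖ ^ 2 = ‖x‖^2 * ‖y‖^2 -
      ((WithLp.equiv 2 (Fin 3 → ℝ) x) ⬝ᵥ (WithLp.equiv 2 (Fin 3 → ℝ) y))^2 := by
    rw [norm_sq_eq_dot, norm_sq_eq_dot, norm_sq_eq_dot]
    simp only [cross3, Equiv.apply_symm_apply]
    rw [cross_dot_cross,
      dotProduct_comm ((WithLp.equiv 2 (Fin 3 → ℝ)) y) ((WithLp.equiv 2 (Fin 3 → ℝ)) x)]
    ring
  nlinarith [norm_nonneg (cross3 x y), mul_nonneg (norm_nonneg x) (norm_nonneg y),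
    sq_nonneg ((WithLp.equiv 2 (Fin 3 → ℝ) x) ⬝ᵥ (WithLp.equiv 2 (Fin 3 → ℝ) y))]

/-- Lyapunov decrease inequality for the unforced closed-loop attitude
alignment dynamics `b_j′ = b_j × ω`, `ω′ = −k_ω ω − e`, with
`e = ∑ j, k j (a j × b j)` and
`V = ∑ j, k j (1 + a j · b j) + ½‖ω‖² + k_V (e · ω)`. -/
theorem lyapunov_decrease_unforced
    (m : ℕ) (a : Fin m → EuclideanSpace ℝ (Fin 3)) (ha : ∀ j, ‖a j‖ = 1)
    (k : Fin m → ℝ) (hk : ∀ j, 0 < k j)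
    (kω kV : ℝ) (hkω : 0 < kω) (hkV : 0 ≤ kV)
    (ω : ℝ → EuclideanSpace ℝ (Fin 3))
    (b : Fin m → ℝ → EuclideanSpace ℝ (Fin 3))
    (hbunit : ∀ j t, ‖b j t‖ = 1)
    (e : ℝ → EuclideanSpace ℝ (Fin 3))
    (he : ∀ t, e t = ∑ j, k j • cross3 (a j) (b j t))
    (hb : ∀ j t, HasDerivAt (b j) (cross3 (b j t) (ω t)) t)
    (hω : ∀ t, HasDerivAt ω (-(kω • ω t) - e t) t)
    (V : ℝ → ℝ)
    (hV : ∀ t, V t = ∑ j, k j * (1 + inner ℝ (a j) (b j t) : ℝ)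
        + 1 / 2 * ‖ω t‖ ^ 2 + kV * (inner ℝ (e t) (ω t) : ℝ)) :
    Differentiable ℝ V ∧
    ∀ t : ℝ, deriv V t ≤ -(kω - kV * ∑ j, k j) * ‖ω t‖ ^ 2
        - kV * ‖e t‖ ^ 2 + kV * kω * ‖e t‖ * ‖ω t‖ := by
  classical
  set e' : ℝ → EuclideanSpace ℝ (Fin 3) :=
    fun t => ∑ j, k j • cross3 (a j) (cross3 (b j t) (ω t)) with he'def
  -- derivative of e
  have heq : e = fun t => ∑ j, k j • crossCLM (a j) (b j t) := by
    funext t; rw [he t]; simp only [crossCLM_apply]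
  have hed : ∀ t, HasDerivAt e (e' t) t := by
    intro t
    have h : HasDerivAt (fun t => ∑ j, k j • crossCLM (a j) (b j t))
        (∑ j, k j • crossCLM (a j) (cross3 (b j t) (ω t))) t :=
      HasDerivAt.fun_sum fun j _ =>
        (((crossCLM (a j)).hasFDerivAt.comp_hasDerivAt t (hb j t)).const_smul (k j))
    rw [heq]
    simpa only [crossCLM_apply] using h
  -- derivative of V
  set D : ℝ → ℝ := fun t =>
    (inner ℝ (e t) (ω t) : ℝ) + (inner ℝ (ω t) (-(kω • ω t) - e t) : ℝ)
      + kV * ((inner ℝ (e t) (-(kω • ω t) - e t) : ℝ) + (inner ℝ (e' t) (ω t) : ℝ)) with hD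
  have hVd : ∀ t, HasDerivAt V (D t) t := by
    intro t
    have hVeq : V = fun t => (∑ j, k j * (1 + inner ℝ (a j) (b j t) : ℝ))
        + 1 / 2 * (inner ℝ (ω t) (ω t) : ℝ) + kV * (inner ℝ (e t) (ω t) : ℝ) := by
      funext s; rw [hV s, real_inner_self_eq_norm_sq]
    have h1 : HasDerivAt (fun t => ∑ j, k j * (1 + inner ℝ (a j) (b j t) : ℝ))
        (∑ j, k j * (inner ℝ (a j) (cross3 (b j t) (ω t)) : ℝ)) t := by
      apply HasDerivAt.fun_sum
      intro j _
      have hi := HasDerivAt.inner ℝ (hasDerivAt_const t (a j)) (hb j t)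
      simp only [inner_zero_left, add_zero] at hi
      exact (hi.const_add 1).const_mul (k j)
    have h1' : (∑ j, k j * (inner ℝ (a j) (cross3 (b j t) (ω t)) : ℝ))
        = (inner ℝ (e t) (ω t) : ℝ) := by
      rw [he t, sum_inner]
      refine Finset.sum_congr rfl fun j _ => ?_
      rw [real_inner_smul_left, cross3_triple]
    have h2 : HasDerivAt (fun t => 1 / 2 * (inner ℝ (ω t) (ω t) : ℝ))
        ((inner ℝ (ω t) (-(kω • ω t) - e t) : ℝ)) t := by
      have h := (HasDerivAt.inner ℝ (hω t) (hω t)).const_mul (1 / 2 : ℝ)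
      refine h.congr_deriv ?_
      rw [real_inner_comm (-(kω • ω t) - e t) (ω t)]
      ring
    have h3 : HasDerivAt (fun t => kV * (inner ℝ (e t) (ω t) : ℝ))
        (kV * ((inner ℝ (e t) (-(kω • ω t) - e t) : ℝ) + (inner ℝ (e' t) (ω t) : ℝ))) t :=
      (HasDerivAt.inner ℝ (hed t) (hω t)).const_mul kV
    have hsum := (h1.add h2).add h3
    rw [h1'] at hsum
    rw [hVeq]
    exact hsum
  refine ⟨fun t => (hVd t).differentiableAt, fun t => ?_⟩
  rw [(hVd t).deriv]
  -- bounds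
  have hA : (inner ℝ (e' t) (ω t) : ℝ) ≤ (∑ j, k j) * ‖ω t‖ ^ 2 := by
    have h1 : (inner ℝ (e' t) (ω t) : ℝ) ≤ ‖e' t‖ * ‖ω t‖ := real_inner_le_norm _ _
    have h2 : ‖e' t‖ ≤ ∑ j, k j * ‖ω t‖ := by
      refine (norm_sum_le _ _).trans (Finset.sum_le_sum fun j _ => ?_)
      rw [norm_smul, Real.norm_eq_abs, abs_of_pos (hk j)]
      refine mul_le_mul_of_nonneg_left ?_ (hk j).le
      calc ‖cross3 (a j) (cross3 (b j t) (ω t))‖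
          ≤ ‖a j‖ * ‖cross3 (b j t) (ω t)‖ := norm_cross3_le _ _
        _ ≤ ‖a j‖ * (‖b j t‖ * ‖ω t‖) :=
            mul_le_mul_of_nonneg_left (norm_cross3_le _ _) (norm_nonneg _)
        _ = ‖ω t‖ := by rw [ha j, hbunit j t]; ring
    calc (inner ℝ (e' t) (ω t) : ℝ) ≤ ‖e' t‖ * ‖ω t‖ := h1
      _ ≤ (∑ j, k j * ‖ω t‖) * ‖ω t‖ :=
          mul_le_mul_of_nonneg_right h2 (norm_nonneg _)
      _ = (∑ j, k j) * ‖ω t‖ ^ 2 := by rw [← Finset.sum_mul]; ring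
  have hB : -(inner ℝ (e t) (ω t) : ℝ) ≤ ‖e t‖ * ‖ω t‖ := by
    have := abs_real_inner_le_norm (e t) (ω t)
    have := abs_le.mp this
    linarith [this.1]
  have hDe : D t = -kω * ‖ω t‖ ^ 2 - (inner ℝ (e t) (ω t) : ℝ)
      + (inner ℝ (e t) (ω t) : ℝ)
      + kV * (-kω * (inner ℝ (e t) (ω t) : ℝ) - ‖e t‖ ^ 2 + (inner ℝ (e' t) (ω t) : ℝ)) := by
    rw [hD]
    simp only [inner_sub_right, inner_neg_right, real_inner_smul_right,
      real_inner_self_eq_norm_sq]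
    rw [real_inner_comm (ω t) (e t)]
    ring
  rw [hDe]
  nlinarith [mul_le_mul_of_nonneg_left hA hkV,
    mul_le_mul_of_nonneg_left hB (mul_nonneg hkV hkω.le)]
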